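/- For all real numbers a > 0 and b > 0, e^{−a}·(1 − e^{−b}) ≤ (b/(a+b))·(1 − e^{−(a+b)}). -/
import Mathlib


/-- the analytic core of the worst-case-interference upper bound. -/
theorem exp_interference_inequality (a b : ℝ) (ha : 0 < a) (hb : 0 < b) :
    Real.exp (-a) * (1 - Real.exp (-b)) ≤
      b / (a + b) * (1 - Real.exp (-(a + b))) := by
  have epa := Real.exp_pos a
  have epb := Real.exp_pos b
  have ia : Real.exp (-a) * Real.exp a = 1 := by rw [← Real.exp_add]; simp
  have ib : Real.exp (-b) * Real.exp b = 1 := by rw [← Real.exp_add]; simp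
  have iab : Real.exp (-(a + b)) = Real.exp (-a) * Real.exp (-b) := by
    rw [← Real.exp_add]; ring_nf
  have h1 : Real.exp b - 1 ≤ b * Real.exp b := by
    have h := Real.add_one_le_exp (-b)
    nlinarith [mul_le_mul_of_nonneg_right h epb.le]
  have h2 : a ≤ Real.exp a - 1 := by
    have := Real.add_one_le_exp a; linarith
  have key : a * (Real.exp b - 1) ≤ b * Real.exp b * (Real.exp a - 1) := by
    calc a * (Real.exp b - 1) ≤ a * (b * Real.exp b) := by
          apply mul_le_mul_of_nonneg_left h1 ha.le
      _ ≤ (Real.exp a - 1) * (b * Real.exp b) := by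
          apply mul_le_mul_of_nonneg_right h2 (by positivity)
      _ = b * Real.exp b * (Real.exp a - 1) := by ring
  rw [div_mul_eq_mul_div, le_div_iff₀ (by linarith : (0:ℝ) < a + b), iab,
    Real.exp_neg a, Real.exp_neg b]
  have goal2 : (Real.exp b - 1) * (a + b) ≤ b * (Real.exp a * Real.exp b - 1) := by
    nlinarith [key]
  calc (Real.exp a)⁻¹ * (1 - (Real.exp b)⁻¹) * (a + b)
      = ((Real.exp b - 1) * (a + b)) * ((Real.exp a)⁻¹ * (Real.exp b)⁻¹) := by
        field_simp
    _ ≤ (b * (Real.exp a * Real.exp b - 1)) * ((Real.exp a)⁻¹ * (Real.exp b)⁻¹) :=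
        mul_le_mul_of_nonneg_right goal2 (by positivity)
    _ = b * (1 - (Real.exp a)⁻¹ * (Real.exp b)⁻¹) := by field_simp
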